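/- The (q,α)-deformed Hermite functions are generated from the ground state by iterating the creation operator: for every integer n ≥ 0 and every x ∈ ℝ \ {0} that stays nonzero under the iterations, φ_n^α(x;q) = (n!_{q,α})^{−1/2} · ((A⁺)^n φ_0^α(·;q))(x), where A⁺ is the operator on functions f : ℝ\{0} → ℝ given by (A⁺f)(x) = (q^{2α+3/2}/(√(1−q)·x)) · [ √(1+q^{−2α−1}x²) f(qx) − f_e(x) − q^{−2α−1} f_o(x) ], with f_e(x)=(f(x)+f(−x))/2 and f_o(x)=(f(x)−f(−x))/2. -/

import Mathlib

open scoped BigOperators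
open Real Filter

noncomputable section

/-- q-shifted factorial `(a;q)_n`. -/
def qPoch (a q : ℝ) (n : ℕ) : ℝ := ∏ k ∈ Finset.range n, (1 - a * q ^ k)

/-- infinite q-shifted factorial `(a;q)_∞`. -/
def qPochInf (a q : ℝ) : ℝ := ∏' k : ℕ, (1 - a * q ^ k)

/-- q-number `⟦x⟧_q = (1-q^x)/(1-q)`. -/
def qNumber (q x : ℝ) : ℝ := (1 - q ^ x) / (1 - q)

/-- generalized q-integer `⟦n⟧_{q,α}`: equals `⟦n⟧_q` for even `n` and
`⟦n+2α+1⟧_q` for odd `n` (so `⟦2m+1⟧_{q,α} = ⟦2m+2α+2⟧_q`). -/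
def qNumAlpha (q α : ℝ) (n : ℕ) : ℝ :=
  if n % 2 = 0 then qNumber q n else qNumber q (n + 2 * α + 1)

/-- generalized q-factorial `n!_{q,α}`. -/
def qFactAlpha (q α : ℝ) (n : ℕ) : ℝ := ∏ k ∈ Finset.range n, qNumAlpha q α (k + 1)

/-- generalized q-shifted factorial `(q;q)_{n,α} = (1-q)^n n!_{q,α}`. -/
def qPochAlpha (q α : ℝ) (n : ℕ) : ℝ := (1 - q) ^ n * qFactAlpha q α n

/-- generalized discrete q-Hermite II polynomials `h̃_{n,α}(x;q)`. -/
def hTilde (q α : ℝ) (n : ℕ) (x : ℝ) : ℝ :=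
  qPoch q q n * ∑ k ∈ Finset.range (n / 2 + 1),
    (-1 : ℝ) ^ k * q ^ ((k * (2 * k + 1) : ℤ) - (2 * n * k : ℤ)) * x ^ (n - 2 * k) /
      (qPoch (q ^ 2) (q ^ 2) k * qPochAlpha q α (n - 2 * k))

/-- the weight `ω_α(x;q) = e_{q²}(-q^{-2α-1}x²) = 1/∏_{k≥0}(1+q^{-2α-1}x²q^{2k})`. -/
def omegaAlpha (q α x : ℝ) : ℝ :=
  (∏' k : ℕ, (1 + q ^ (-(2 * α + 1)) * x ^ 2 * q ^ (2 * k)))⁻¹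

/-- normalization constant `c_α`. -/
def cAlpha (q α : ℝ) : ℝ :=
  Real.sqrt (qPochInf (-q ^ (-(2 * α + 1))) (q ^ 2) * qPochInf (-q ^ (2 * α + 3)) (q ^ 2) *
      qPochInf (q ^ (2 * α + 2)) (q ^ 2) /
    (2 * (1 - q) *
      (qPochInf (-q) (q ^ 2) * qPochInf (-q) (q ^ 2) * qPochInf (q ^ 2) (q ^ 2))))

/-- normalization constant `d_{n,α} = c_α q^{n²/2} (q;q)_{n,α}^{1/2} / (q;q)_n`. -/
def dAlpha (q α : ℝ) (n : ℕ) : ℝ :=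
  cAlpha q α * q ^ (((n : ℝ) ^ 2) / 2) * Real.sqrt (qPochAlpha q α n) / qPoch q q n

/-- the (q,α)-deformed Hermite functions `φ_n^α(x;q)`. -/
def phiQ (q α : ℝ) (n : ℕ) (x : ℝ) : ℝ :=
  dAlpha q α n * Real.sqrt (omegaAlpha q α x) * hTilde q α n x

/-- parity indicator `θ(n)`: 1 if `n` is odd, 0 if `n` is even. -/
def theta (n : ℕ) : ℝ := if n % 2 = 1 then 1 else 0

/-- the q-Gamma function `Γ_q(z) = (q;q)_∞ / (q^z;q)_∞ · (1-q)^{1-z}`. -/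
def qGammaF (q z : ℝ) : ℝ := qPochInf q q / qPochInf (q ^ z) q * (1 - q) ^ (1 - z)

/-- Rosenblum generalized factorial `γ_ν(n)`. -/
def gammaGen (ν : ℝ) (n : ℕ) : ℝ :=
  2 ^ n * (Nat.factorial (n / 2) : ℝ) *
    Real.Gamma (ν + (((n + 1) / 2 : ℕ) : ℝ) + 1 / 2) / Real.Gamma (ν + 1 / 2)

/-- generalized Hermite polynomials `H_n^ν(x)`. -/
def HGen (ν : ℝ) (n : ℕ) (x : ℝ) : ℝ :=
  (Nat.factorial n : ℝ) * ∑ k ∈ Finset.range (n / 2 + 1),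
    (-1 : ℝ) ^ k * (2 * x) ^ (n - 2 * k) / ((Nat.factorial k : ℝ) * gammaGen ν (n - 2 * k))

/-- Rosenblum generalized Hermite functions `φ_n^ν(x)`. -/
def phiGen (ν : ℝ) (n : ℕ) (x : ℝ) : ℝ :=
  Real.sqrt (gammaGen ν n / Real.Gamma (ν + 1 / 2)) * Real.exp (-x ^ 2 / 2) *
    HGen ν n x / ((2 : ℝ) ^ ((n : ℝ) / 2) * (Nat.factorial n : ℝ))

/-- symmetric q-number `[x]_s = (s^x - s^{-x})/(s - s^{-1})`. -/
def qNumSym (s x : ℝ) : ℝ := (s ^ x - s ^ (-x)) / (s - s⁻¹)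

/-- Euler q-exponential `e_q(z) = Σ z^k/(q;q)_k`. -/
def eExp (q z : ℝ) : ℝ := ∑' k : ℕ, z ^ k / qPoch q q k

/-- generalized q-exponential `E_{q,α}(z) = Σ q^{k(k-1)/2} z^k/(q;q)_{k,α}`. -/
def bigEAlpha (q α z : ℝ) : ℝ := ∑' k : ℕ, q ^ (k * (k - 1) / 2) * z ^ k / qPochAlpha q α k

/-- generalized q-exponential `e_{q,α}(z) = Σ z^k/(q;q)_{k,α}`. -/
def eExpAlpha (q α z : ℝ) : ℝ := ∑' k : ℕ, z ^ k / qPochAlpha q α k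

/-- the creation operator `A⁺` acting on real functions through their even and odd parts. -/
def aPlus (q α : ℝ) (f : ℝ → ℝ) (x : ℝ) : ℝ :=
  q ^ (2 * α + 3 / 2) / (Real.sqrt (1 - q) * x) *
    (Real.sqrt (1 + q ^ (-(2 * α + 1)) * x ^ 2) * f (q * x) -
      (f x + f (-x)) / 2 - q ^ (-(2 * α + 1)) * ((f x - f (-x)) / 2))

section Aux
variable {q α : ℝ}

lemma hq1' (hq1 : q < 1) : (0:ℝ) < 1 - q := by linarith

lemma qrpow_lt_one (hq0 : 0 < q) (hq1 : q < 1) (t : ℝ) (ht : 0 < t) : q ^ t < 1 :=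
  Real.rpow_lt_one hq0.le hq1 ht

lemma qNumAlpha_pos (hq0 : 0 < q) (hq1 : q < 1) (hα : -1 < α) (n : ℕ) :
    0 < qNumAlpha q α (n + 1) := by
  unfold qNumAlpha qNumber
  split
  · apply div_pos _ (hq1' hq1)
    have : q ^ (((n+1:ℕ)):ℝ) < 1 := qrpow_lt_one hq0 hq1 _ (by positivity)
    linarith
  · apply div_pos _ (hq1' hq1)
    have he : ((n+1:ℕ):ℝ) + 2*α+1 = (n:ℝ) + (2*α+2) := by push_cast; ring
    rw [he]
    have : q ^ ((n:ℝ) + (2*α+2)) < 1 := qrpow_lt_one hq0 hq1 _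
      (by have hn : (0:ℝ) ≤ n := Nat.cast_nonneg n; linarith)
    linarith

lemma qFactAlpha_pos (hq0 : 0 < q) (hq1 : q < 1) (hα : -1 < α) (n : ℕ) :
    0 < qFactAlpha q α n := by
  unfold qFactAlpha
  exact Finset.prod_pos fun k _ => qNumAlpha_pos hq0 hq1 hα k

lemma qPochAlpha_pos (hq0 : 0 < q) (hq1 : q < 1) (hα : -1 < α) (n : ℕ) :
    0 < qPochAlpha q α n :=
  mul_pos (pow_pos (hq1' hq1) n) (qFactAlpha_pos hq0 hq1 hα n)

lemma qPoch_q_pos (hq0 : 0 < q) (hq1 : q < 1) (n : ℕ) : 0 < qPoch q q n := by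
  unfold qPoch
  refine Finset.prod_pos fun k _ => ?_
  have h1 : q ^ k ≤ 1 := pow_le_one₀ hq0.le hq1.le
  have h2 : (0:ℝ) < q ^ k := pow_pos hq0 k
  nlinarith

lemma qPoch_q2_pos (hq0 : 0 < q) (hq1 : q < 1) (n : ℕ) : 0 < qPoch (q^2) (q^2) n := by
  unfold qPoch
  refine Finset.prod_pos fun k _ => ?_
  have h2 : q^2 < 1 := by nlinarith
  have h1 : (q^2) ^ k ≤ 1 := pow_le_one₀ (by positivity) h2.le
  have h3 : (0:ℝ) < (q^2) ^ k := by positivity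
  nlinarith

lemma qPoch_succ (a Q : ℝ) (n : ℕ) : qPoch a Q (n+1) = qPoch a Q n * (1 - a * Q ^ n) :=
  Finset.prod_range_succ _ _

lemma qFactAlpha_succ (n : ℕ) : qFactAlpha q α (n+1) = qFactAlpha q α n * qNumAlpha q α (n+1) :=
  Finset.prod_range_succ _ _

lemma qPochAlpha_succ (n : ℕ) :
    qPochAlpha q α (n+1) = qPochAlpha q α n * ((1 - q) * qNumAlpha q α (n+1)) := by
  unfold qPochAlpha
  rw [qFactAlpha_succ]; ring

lemma one_sub_mul_qNumber (hq1 : q < 1) (x : ℝ) : (1 - q) * qNumber q x = 1 - q ^ x := by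
  unfold qNumber
  have := hq1' hq1
  field_simp

lemma qPochAlpha_succ_even (hq0 : 0 < q) (hq1 : q < 1) (m : ℕ) (h : (m + 1) % 2 = 0) :
    qPochAlpha q α (m+1) = qPochAlpha q α m * (1 - q ^ (m+1)) := by
  rw [qPochAlpha_succ]
  unfold qNumAlpha
  rw [if_pos h, one_sub_mul_qNumber hq1, Real.rpow_natCast]

lemma qPochAlpha_succ_odd (hq0 : 0 < q) (hq1 : q < 1) (m : ℕ) (h : (m + 1) % 2 = 1) :
    qPochAlpha q α (m+1) = qPochAlpha q α m * (1 - q ^ (m+1) * q ^ (2*α+1)) := by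
  rw [qPochAlpha_succ]
  unfold qNumAlpha
  rw [if_neg (by omega), one_sub_mul_qNumber hq1]
  have : q ^ (((m+1:ℕ):ℝ) + 2*α+1) = q ^ (m+1) * q ^ (2*α+1) := by
    rw [show ((m+1:ℕ):ℝ) + 2*α+1 = ((m+1:ℕ):ℝ) + (2*α+1) by ring,
      Real.rpow_add hq0, Real.rpow_natCast]
  rw [this]

end Aux
/-- coefficient of the q-Hermite sum -/
def Tc (q α : ℝ) (n k : ℕ) : ℝ :=
  (-1 : ℝ) ^ k * q ^ ((k * (2 * k + 1) : ℤ) - (2 * n * k : ℤ)) /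
    (qPoch (q ^ 2) (q ^ 2) k * qPochAlpha q α (n - 2 * k))

section CoefLemmas
variable {q α : ℝ}

lemma Tc_eq (hq0 : 0 < q) (n k : ℕ) :
    Tc q α n k = (-1 : ℝ)^k * q^(k*(2*k+1)) /
      (q^(2*n*k) * (qPoch (q^2) (q^2) k * qPochAlpha q α (n - 2*k))) := by
  have hqz : q ≠ 0 := ne_of_gt hq0
  unfold Tc
  rw [zpow_sub₀ hqz]
  rw [show ((k : ℤ) * (2 * k + 1)) = ((k*(2*k+1) : ℕ) : ℤ) by push_cast; ring]
  rw [show ((2 : ℤ) * n * k) = ((2*n*k : ℕ) : ℤ) by push_cast; ring]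
  rw [zpow_natCast, zpow_natCast]
  field_simp

lemma oneSub_pow_pos (hq0 : 0 < q) (hq1 : q < 1) (k : ℕ) (hk : 1 ≤ k) : 0 < 1 - q^k := by
  have : q ^ k < 1 := pow_lt_one₀ hq0.le hq1 (by omega)
  linarith

lemma oneSub_pow_mul_pos (hq0 : 0 < q) (hq1 : q < 1) (hα : -1 < α) (k : ℕ) (hk : 1 ≤ k) :
    0 < 1 - q^k * q^(2*α+1) := by
  have h : q^k * q^(2*α+1) = q ^ ((k:ℝ) + (2*α+1)) := by
    rw [← Real.rpow_natCast q k, ← Real.rpow_add hq0]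
  have h2 : q ^ ((k:ℝ) + (2*α+1)) < 1 := by
    apply Real.rpow_lt_one hq0.le hq1
    have : (1:ℝ) ≤ (k:ℝ) := by exact_mod_cast hk
    linarith
  rw [h]; linarith

lemma coeffL0 (hq0 : 0 < q) (hq1 : q < 1) (hα : -1 < α) (n : ℕ) :
    q^n * q ^ (-(2*α+1) : ℝ) * (qPochAlpha q α (n+1) / qPochAlpha q α n) * Tc q α (n+1) 0
      = q ^ (-(2*α+1) : ℝ) * q^n * Tc q α n 0 := by
  have hP : ∀ k, qPochAlpha q α k ≠ 0 := fun k => ne_of_gt (qPochAlpha_pos hq0 hq1 hα k)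
  simp only [Tc_eq hq0, Nat.mul_zero, Nat.zero_mul, pow_zero, Nat.sub_zero, mul_zero, zero_mul]
  rw [show qPoch (q^2) (q^2) 0 = 1 from Finset.prod_range_zero _]
  field_simp
  rw [div_mul_eq_div_div, div_self (hP (n+1))]
end CoefLemmas
section L1
variable {q α : ℝ}

lemma coeffL1 (hq0 : 0 < q) (hq1 : q < 1) (hα : -1 < α) (m j : ℕ) :
    q^(m+2*j+2) * q ^ (-(2*α+1) : ℝ) *
        (qPochAlpha q α (m+2*j+3) / qPochAlpha q α (m+2*j+2)) * Tc q α (m+2*j+3) (j+1)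
      = Tc q α (m+2*j+2) j * (q^(m+2) - (if m % 2 = 1 then q ^ (-(2*α+1):ℝ) else 1))
        + q ^ (-(2*α+1):ℝ) * q^m * Tc q α (m+2*j+2) (j+1) := by
  have hqz : q ≠ 0 := ne_of_gt hq0
  have hc : q ^ (-(2*α+1):ℝ) = (q ^ (2*α+1:ℝ))⁻¹ := Real.rpow_neg hq0.le _
  have hu : (0:ℝ) < q ^ (2*α+1:ℝ) := Real.rpow_pos_of_pos hq0 _
  have hPm : qPochAlpha q α m ≠ 0 := ne_of_gt (qPochAlpha_pos hq0 hq1 hα m)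
  have hP2 : qPochAlpha q α (m+2*j+2) ≠ 0 := ne_of_gt (qPochAlpha_pos hq0 hq1 hα _)
  have hQj : qPoch (q^2) (q^2) j ≠ 0 := ne_of_gt (qPoch_q2_pos hq0 hq1 j)
  have hQs : (1 - q^2 * (q^2)^j) ≠ 0 := by
    have : q^2 * (q^2)^j = q^(2*j+2) := by ring
    rw [this]; exact ne_of_gt (oneSub_pow_pos hq0 hq1 _ (by omega))
  rw [Tc_eq hq0, Tc_eq hq0, Tc_eq hq0,
    show m+2*j+3 - 2*(j+1) = m+1 by omega,
    show m+2*j+2 - 2*j = m+2 by omega,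
    show m+2*j+2 - 2*(j+1) = m by omega,
    qPoch_succ, hc]
  rcases Nat.even_or_odd m with hm | hm
  · have hm2 : m % 2 = 0 := Nat.even_iff.1 hm
    rw [if_neg (by omega)]
    rw [show (m+2*j+3) = (m+2*j+2)+1 by omega,
      qPochAlpha_succ_odd hq0 hq1 (m := m+2*j+2) (by omega),
      show qPochAlpha q α (m+2) = qPochAlpha q α ((m+1)+1) from rfl,
      qPochAlpha_succ_even hq0 hq1 (m+1) (by omega),
      qPochAlpha_succ_odd hq0 hq1 (m := m) (by omega)]
    have h1 : (1 - q^(2*α+1) * q^(m+1)) ≠ 0 := by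
      rw [mul_comm]; exact ne_of_gt (oneSub_pow_mul_pos hq0 hq1 hα _ (by omega))
    have h2 : (1 - q^(m+1+1)) ≠ 0 := ne_of_gt (oneSub_pow_pos hq0 hq1 _ (by omega))
    field_simp
    ring
  · have hm2 : m % 2 = 1 := Nat.odd_iff.1 hm
    rw [if_pos hm2]
    rw [show (m+2*j+3) = (m+2*j+2)+1 by omega,
      qPochAlpha_succ_even hq0 hq1 (m+2*j+2) (by omega),
      show qPochAlpha q α (m+2) = qPochAlpha q α ((m+1)+1) from rfl,
      qPochAlpha_succ_odd hq0 hq1 (m := m+1) (by omega),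
      qPochAlpha_succ_even hq0 hq1 m (by omega)]
    have h1 : (1 - q^(2*α+1) * q^(m+1+1)) ≠ 0 := by
      rw [mul_comm]; exact ne_of_gt (oneSub_pow_mul_pos hq0 hq1 hα _ (by omega))
    have h2 : (1 - q^(m+1)) ≠ 0 := ne_of_gt (oneSub_pow_pos hq0 hq1 _ (by omega))
    field_simp
    ring
end L1
section L2
variable {q α : ℝ}
lemma qPochAlpha_zero : qPochAlpha q α 0 = 1 := by simp [qPochAlpha, qFactAlpha]

lemma coeffL2 (hq0 : 0 < q) (hq1 : q < 1) (hα : -1 < α) (M : ℕ) :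
    q^(2*M+1) * q ^ (-(2*α+1):ℝ) *
        (qPochAlpha q α (2*M+2) / qPochAlpha q α (2*M+1)) * Tc q α (2*M+2) (M+1)
      = Tc q α (2*M+1) M * (q - q ^ (-(2*α+1):ℝ)) := by
  have hqz : q ≠ 0 := ne_of_gt hq0
  have hc : q ^ (-(2*α+1):ℝ) = (q ^ (2*α+1:ℝ))⁻¹ := Real.rpow_neg hq0.le _
  have hu : (0:ℝ) < q ^ (2*α+1:ℝ) := Real.rpow_pos_of_pos hq0 _
  have hP1 : qPochAlpha q α (2*M+1) ≠ 0 := ne_of_gt (qPochAlpha_pos hq0 hq1 hα _)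
  have hQM : qPoch (q^2) (q^2) M ≠ 0 := ne_of_gt (qPoch_q2_pos hq0 hq1 M)
  have hQs : (1 - q^2 * (q^2)^M) ≠ 0 := by
    have h : q^2 * (q^2)^M = q^(2*M+2) := by ring
    rw [h]; exact ne_of_gt (oneSub_pow_pos hq0 hq1 _ (by omega))
  have h1 : (1 - q^(2*α+1:ℝ) * q) ≠ 0 := by
    have := oneSub_pow_mul_pos hq0 hq1 hα 1 le_rfl
    rw [pow_one, mul_comm] at this; exact ne_of_gt this
  rw [Tc_eq hq0, Tc_eq hq0,
    show 2*M+2 - 2*(M+1) = 0 by omega,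
    show 2*M+1 - 2*M = 1 by omega,
    show qPochAlpha q α (2*M+2) = qPochAlpha q α ((2*M+1)+1) from rfl,
    qPochAlpha_succ_even hq0 hq1 (2*M+1) (by omega),
    show qPochAlpha q α 1 = qPochAlpha q α (0+1) from rfl,
    qPochAlpha_succ_odd hq0 hq1 (m := 0) (by omega),
    qPochAlpha_zero, qPoch_succ, hc]
  norm_num
  have h2 : (1 - q^(2*M+1+1)) ≠ 0 := ne_of_gt (oneSub_pow_pos hq0 hq1 _ (by omega))
  field_simp
  ring
end L2
section KeySum
variable {q α : ℝ}

lemma key_sum (hq0 : 0 < q) (hq1 : q < 1) (hα : -1 < α) (n : ℕ) (x : ℝ) :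
    (1 + q ^ (-(2*α+1):ℝ) * x^2) * ∑ k ∈ Finset.range (n/2+1), Tc q α n k * (q*x)^(n-2*k)
      - (if n % 2 = 1 then q ^ (-(2*α+1):ℝ) else 1) *
          ∑ k ∈ Finset.range (n/2+1), Tc q α n k * x^(n-2*k)
    = q^n * q ^ (-(2*α+1):ℝ) * (qPochAlpha q α (n+1) / qPochAlpha q α n)
        * x * ∑ j ∈ Finset.range ((n+1)/2+1), Tc q α (n+1) j * x^(n+1-2*j) := by
  rcases Nat.even_or_odd n with ⟨M, rfl⟩ | ⟨M, rfl⟩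
  · -- even case n = M + M
    rw [if_neg (by omega), one_mul,
      show (M+M)/2 = M from by omega, show (M+M+1)/2 = M from by omega]
    have hL : (1 + q ^ (-(2*α+1):ℝ) * x^2) *
          ∑ k ∈ Finset.range (M+1), Tc q α (M+M) k * (q*x)^(M+M-2*k)
        - ∑ k ∈ Finset.range (M+1), Tc q α (M+M) k * x^(M+M-2*k)
      = (∑ k ∈ Finset.range M,
          (Tc q α (M+M) k * (q^(M+M-2*k) - 1) * x^(M+M-2*k)
            + q ^ (-(2*α+1):ℝ) * Tc q α (M+M) (k+1) * q^(M+M-2*(k+1)) * x^(M+M-2*(k+1)) * x^2))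
        + q ^ (-(2*α+1):ℝ) * Tc q α (M+M) 0 * q^(M+M) * x^(M+M) * x^2 := by
      rw [Finset.mul_sum, ← Finset.sum_sub_distrib]
      rw [Finset.sum_congr rfl (fun k hk =>
        (by rw [mul_pow]; ring :
          (1 + q ^ (-(2*α+1):ℝ) * x^2) * (Tc q α (M+M) k * (q*x)^(M+M-2*k))
            - Tc q α (M+M) k * x^(M+M-2*k)
          = (Tc q α (M+M) k * (q^(M+M-2*k) - 1) * x^(M+M-2*k))
            + q ^ (-(2*α+1):ℝ) * Tc q α (M+M) k * q^(M+M-2*k) * x^(M+M-2*k) * x^2)),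
        Finset.sum_add_distrib, Finset.sum_range_succ, show M+M-2*M = 0 from by omega]
      rw [Finset.sum_range_succ']
      simp only [pow_zero, sub_self, mul_zero, zero_mul, add_zero, Nat.mul_zero, Nat.sub_zero]
      rw [Finset.sum_add_distrib]
      ring
    rw [hL]
    have hR : q^(M+M) * q ^ (-(2*α+1):ℝ) *
          (qPochAlpha q α (M+M+1) / qPochAlpha q α (M+M)) * x *
          ∑ j ∈ Finset.range (M+1), Tc q α (M+M+1) j * x^(M+M+1-2*j)
      = (∑ j ∈ Finset.range M,
          q^(M+M) * q ^ (-(2*α+1):ℝ) * (qPochAlpha q α (M+M+1) / qPochAlpha q α (M+M))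
            * Tc q α (M+M+1) (j+1) * x^(M+M-2*j))
        + q^(M+M) * q ^ (-(2*α+1):ℝ) * (qPochAlpha q α (M+M+1) / qPochAlpha q α (M+M))
            * Tc q α (M+M+1) 0 * x^(M+M+2) := by
      rw [Finset.mul_sum]
      rw [Finset.sum_congr rfl (fun j hj =>
        (by rw [pow_succ]; ring :
          q^(M+M) * q ^ (-(2*α+1):ℝ) * (qPochAlpha q α (M+M+1) / qPochAlpha q α (M+M)) * x *
              (Tc q α (M+M+1) j * x^(M+M+1-2*j))
            = q^(M+M) * q ^ (-(2*α+1):ℝ) * (qPochAlpha q α (M+M+1) / qPochAlpha q α (M+M))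
                * Tc q α (M+M+1) j * x^((M+M+1-2*j)+1)))]
      rw [Finset.sum_range_succ']
      refine congrArg₂ (· + ·) (Finset.sum_congr rfl fun j hj => ?_) ?_
      · have hjM := Finset.mem_range.1 hj
        rw [show (M+M+1-2*(j+1))+1 = M+M-2*j from by omega]
      · rw [show (M+M+1-2*0)+1 = M+M+2 from by omega]
    rw [hR]
    congr 1
    · refine Finset.sum_congr rfl fun k hk => ?_
      have hkM := Finset.mem_range.1 hk
      obtain ⟨m, hm⟩ : ∃ m, M+M = m+2*k+2 := ⟨M+M-2*k-2, by omega⟩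
      have hmeven : m % 2 = 0 := by omega
      rw [hm]
      simp only [show m+2*k+2-2*k = m+2 from by omega,
        show m+2*k+2-2*(k+1) = m from by omega,
        show m+2*k+2+1 = m+2*k+3 from rfl]
      have hL1 := coeffL1 hq0 hq1 hα m k
      rw [if_neg (by omega)] at hL1
      linear_combination (-(x^(m+2))) * hL1
    · linear_combination (-(x^(M+M+2))) * coeffL0 hq0 hq1 hα (M+M)
  · -- odd case n = 2*M+1
    rw [if_pos (by omega),
      show (2*M+1)/2 = M from by omega, show (2*M+1+1)/2 = M+1 from by omega]
    have hL : (1 + q ^ (-(2*α+1):ℝ) * x^2) *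
          ∑ k ∈ Finset.range (M+1), Tc q α (2*M+1) k * (q*x)^(2*M+1-2*k)
        - q ^ (-(2*α+1):ℝ) * ∑ k ∈ Finset.range (M+1), Tc q α (2*M+1) k * x^(2*M+1-2*k)
      = ((∑ k ∈ Finset.range M,
          (Tc q α (2*M+1) k * (q^(2*M+1-2*k) - q ^ (-(2*α+1):ℝ)) * x^(2*M+1-2*k)
            + q ^ (-(2*α+1):ℝ) * Tc q α (2*M+1) (k+1) * q^(2*M+1-2*(k+1))
                * x^(2*M+1-2*(k+1)) * x^2))
        + Tc q α (2*M+1) M * (q^1 - q ^ (-(2*α+1):ℝ)) * x^1)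
        + q ^ (-(2*α+1):ℝ) * Tc q α (2*M+1) 0 * q^(2*M+1) * x^(2*M+1) * x^2 := by
      rw [Finset.mul_sum, Finset.mul_sum, ← Finset.sum_sub_distrib]
      rw [Finset.sum_congr rfl (fun k hk =>
        (by rw [mul_pow]; ring :
          (1 + q ^ (-(2*α+1):ℝ) * x^2) * (Tc q α (2*M+1) k * (q*x)^(2*M+1-2*k))
            - q ^ (-(2*α+1):ℝ) * (Tc q α (2*M+1) k * x^(2*M+1-2*k))
          = (Tc q α (2*M+1) k * (q^(2*M+1-2*k) - q ^ (-(2*α+1):ℝ)) * x^(2*M+1-2*k))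
            + q ^ (-(2*α+1):ℝ) * Tc q α (2*M+1) k * q^(2*M+1-2*k) * x^(2*M+1-2*k) * x^2)),
        Finset.sum_add_distrib, Finset.sum_range_succ, show 2*M+1-2*M = 1 from by omega]
      conv_lhs =>
        rw [Finset.sum_range_succ']
      simp only [Nat.mul_zero, Nat.sub_zero]
      rw [Finset.sum_add_distrib]
      ring
    rw [hL]
    have hR : q^(2*M+1) * q ^ (-(2*α+1):ℝ) *
          (qPochAlpha q α (2*M+1+1) / qPochAlpha q α (2*M+1)) * x *
          ∑ j ∈ Finset.range (M+1+1), Tc q α (2*M+1+1) j * x^(2*M+1+1-2*j)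
      = ((∑ j ∈ Finset.range M,
          q^(2*M+1) * q ^ (-(2*α+1):ℝ) * (qPochAlpha q α (2*M+1+1) / qPochAlpha q α (2*M+1))
            * Tc q α (2*M+1+1) (j+1) * x^(2*M+1-2*j))
        + q^(2*M+1) * q ^ (-(2*α+1):ℝ) * (qPochAlpha q α (2*M+1+1) / qPochAlpha q α (2*M+1))
            * Tc q α (2*M+1+1) (M+1) * x^1)
        + q^(2*M+1) * q ^ (-(2*α+1):ℝ) * (qPochAlpha q α (2*M+1+1) / qPochAlpha q α (2*M+1))
            * Tc q α (2*M+1+1) 0 * x^(2*M+3) := by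
      rw [Finset.mul_sum]
      rw [Finset.sum_congr rfl (fun j hj =>
        (by rw [pow_succ]; ring :
          q^(2*M+1) * q ^ (-(2*α+1):ℝ) * (qPochAlpha q α (2*M+1+1) / qPochAlpha q α (2*M+1)) * x *
              (Tc q α (2*M+1+1) j * x^(2*M+1+1-2*j))
            = q^(2*M+1) * q ^ (-(2*α+1):ℝ) * (qPochAlpha q α (2*M+1+1) / qPochAlpha q α (2*M+1))
                * Tc q α (2*M+1+1) j * x^((2*M+1+1-2*j)+1)))]
      rw [Finset.sum_range_succ', Finset.sum_range_succ]
      refine congrArg₂ (· + ·)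
        (congrArg₂ (· + ·) (Finset.sum_congr rfl fun j hj => ?_) ?_) ?_
      · have hjM := Finset.mem_range.1 hj
        rw [show (2*M+1+1-2*(j+1))+1 = 2*M+1-2*j from by omega]
      · rw [show (2*M+1+1-2*(M+1))+1 = 1 from by omega]
      · rw [show (2*M+1+1-2*0)+1 = 2*M+3 from by omega]
    rw [hR]
    congr 1
    · congr 1
      · refine Finset.sum_congr rfl fun k hk => ?_
        have hkM := Finset.mem_range.1 hk
        obtain ⟨m, hm⟩ : ∃ m, 2*M+1 = m+2*k+2 := ⟨2*M+1-2*k-2, by omega⟩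
        have hmodd : m % 2 = 1 := by omega
        rw [hm]
        simp only [show m+2*k+2-2*k = m+2 from by omega,
          show m+2*k+2-2*(k+1) = m from by omega,
          show m+2*k+2+1 = m+2*k+3 from rfl]
        have hL1 := coeffL1 hq0 hq1 hα m k
        rw [if_pos hmodd] at hL1
        linear_combination (-(x^(m+2))) * hL1
      · have hL2 := coeffL2 hq0 hq1 hα M
        linear_combination (-x) * hL2
    · linear_combination (-(x^(2*M+3))) * coeffL0 hq0 hq1 hα (2*M+1)
end KeySum
section HT
variable {q α : ℝ}

lemma hTilde_eq (n : ℕ) (x : ℝ) :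
    hTilde q α n x = qPoch q q n * ∑ k ∈ Finset.range (n/2+1), Tc q α n k * x^(n-2*k) := by
  unfold hTilde Tc
  congr 1
  refine Finset.sum_congr rfl fun k hk => ?_
  ring

lemma hTilde_parity (n : ℕ) (x : ℝ) : hTilde q α n (-x) = (-1)^n * hTilde q α n x := by
  rw [hTilde_eq, hTilde_eq, Finset.mul_sum, Finset.mul_sum, Finset.mul_sum]
  refine Finset.sum_congr rfl fun k hk => ?_
  have hk2 : 2*k ≤ n := by have := Finset.mem_range.1 hk; omega
  have h1 : (-x : ℝ)^(n-2*k) = (-1)^n * x^(n-2*k) := by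
    rw [neg_pow]
    have h2 : ((-1:ℝ))^(n-2*k) = (-1)^n := by
      have h3 : ((-1:ℝ))^(n-2*k) * (-1)^(2*k) = (-1)^n := by
        rw [← pow_add]
        congr 1
        omega
      have h4 : ((-1:ℝ))^(2*k) = 1 := by
        rw [pow_mul]; norm_num
      rw [h4, mul_one] at h3
      exact h3
    rw [h2]
  rw [h1]
  ring

/-- the key q-difference identity in cleared form -/
lemma key (hq0 : 0 < q) (hq1 : q < 1) (hα : -1 < α) (n : ℕ) (x : ℝ) :
    ((1 + q ^ (-(2*α+1):ℝ) * x^2) * hTilde q α n (q*x)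
        - (if n % 2 = 1 then q ^ (-(2*α+1):ℝ) else 1) * hTilde q α n x) * (1 - q^(n+1))
      = q^n * q ^ (-(2*α+1):ℝ) * (qPochAlpha q α (n+1) / qPochAlpha q α n)
          * x * hTilde q α (n+1) x := by
  rw [hTilde_eq, hTilde_eq, hTilde_eq, qPoch_succ, show q * q^n = q^(n+1) from (pow_succ q n).symm ▸ by ring]
  linear_combination ((1 - q^(n+1)) * qPoch q q n) * key_sum hq0 hq1 hα n x
end HT
section Om
variable {q α : ℝ}

lemma one_add_pos (hq0 : 0 < q) (x : ℝ) :
    (0:ℝ) < 1 + q ^ (-(2 * α + 1) : ℝ) * x ^ 2 := by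
  have h := Real.rpow_pos_of_pos hq0 (-(2 * α + 1))
  nlinarith [sq_nonneg x, mul_nonneg h.le (sq_nonneg x)]

lemma fac_nonneg (hq0 : 0 < q) (x : ℝ) (k : ℕ) :
    0 ≤ q ^ (-(2 * α + 1) : ℝ) * x ^ 2 * q ^ (2 * k) := by
  have := Real.rpow_pos_of_pos hq0 (-(2 * α + 1))
  positivity

lemma omega_log_summable (hq0 : 0 < q) (hq1 : q < 1) (x : ℝ) :
    Summable (fun k : ℕ => Real.log (1 + q ^ (-(2 * α + 1) : ℝ) * x ^ 2 * q ^ (2 * k))) := by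
  have hgs : Summable (fun k : ℕ => (q ^ (-(2 * α + 1) : ℝ) * x ^ 2) * q ^ (2*k)) := by
    have h := (summable_geometric_of_lt_one (r := q^2) (by positivity)
      (by nlinarith)).mul_left (q ^ (-(2 * α + 1) : ℝ) * x ^ 2)
    exact h.congr fun k => by rw [← pow_mul]
  refine Summable.of_nonneg_of_le
    (fun k => Real.log_nonneg (le_add_of_nonneg_right (fac_nonneg hq0 x k)))
    (fun k => (Real.log_le_sub_one_of_pos ?_).trans (by rw [mul_assoc]; linarith)) hgs
  have := fac_nonneg (α := α) hq0 x k
  linarith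

lemma omegaMultipliable (hq0 : 0 < q) (hq1 : q < 1) (x : ℝ) :
    Multipliable (fun k : ℕ => 1 + q ^ (-(2 * α + 1) : ℝ) * x ^ 2 * q ^ (2 * k)) := by
  have hpos : ∀ k : ℕ, (0:ℝ) < 1 + q ^ (-(2 * α + 1) : ℝ) * x ^ 2 * q ^ (2 * k) := fun k => by
    have := fac_nonneg (α := α) hq0 x k; linarith
  exact Real.multipliable_of_summable_log hpos (omega_log_summable hq0 hq1 x)

lemma omegaProd_pos (hq0 : 0 < q) (hq1 : q < 1) (x : ℝ) :
    0 < ∏' k : ℕ, (1 + q ^ (-(2 * α + 1) : ℝ) * x ^ 2 * q ^ (2 * k)) := by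
  have hpos : ∀ k : ℕ, (0:ℝ) < 1 + q ^ (-(2 * α + 1) : ℝ) * x ^ 2 * q ^ (2 * k) := fun k => by
    have := fac_nonneg (α := α) hq0 x k; linarith
  have h2 := Real.rexp_tsum_eq_tprod hpos (omega_log_summable hq0 hq1 x)
  rw [← h2]
  exact Real.exp_pos _

lemma omegaAlpha_pos (hq0 : 0 < q) (hq1 : q < 1) (x : ℝ) : 0 < omegaAlpha q α x :=
  inv_pos.2 (omegaProd_pos hq0 hq1 x)

lemma omegaAlpha_even (x : ℝ) : omegaAlpha q α (-x) = omegaAlpha q α x := by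
  unfold omegaAlpha
  rw [neg_pow]
  norm_num

lemma omegaAlpha_q (hq0 : 0 < q) (hq1 : q < 1) (x : ℝ) :
    omegaAlpha q α (q * x)
      = (1 + q ^ (-(2 * α + 1) : ℝ) * x ^ 2) * omegaAlpha q α x := by
  unfold omegaAlpha
  have h2 : (∏' k : ℕ, (1 + q ^ (-(2 * α + 1) : ℝ) * (q*x) ^ 2 * q ^ (2 * k)))
      = ∏' k : ℕ, (1 + q ^ (-(2 * α + 1) : ℝ) * x ^ 2 * q ^ (2 * (k+1))) :=
    tprod_congr fun k => by rw [show q ^ (-(2*α+1):ℝ) * (q*x)^2 * q^(2*k)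
      = q ^ (-(2*α+1):ℝ) * x^2 * q^(2*(k+1)) from by ring]
  have hm2 : Multipliable (fun k : ℕ => 1 + q ^ (-(2 * α + 1) : ℝ) * x ^ 2 * q ^ (2 * (k+1))) := by
    have h := omegaMultipliable (α := α) hq0 hq1 (q*x)
    exact h.congr fun k => by rw [show q ^ (-(2*α+1):ℝ) * (q*x)^2 * q^(2*k)
      = q ^ (-(2*α+1):ℝ) * x^2 * q^(2*(k+1)) from by ring]
  have h1 := tprod_eq_zero_mul'
    (f := fun k : ℕ => 1 + q ^ (-(2 * α + 1) : ℝ) * x ^ 2 * q ^ (2 * k)) hm2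
  rw [h2]
  have hnz : (∏' k : ℕ, (1 + q ^ (-(2 * α + 1) : ℝ) * x ^ 2 * q ^ (2 * k))) ≠ 0 :=
    ne_of_gt (omegaProd_pos hq0 hq1 x)
  have hnz2 : (1 + q ^ (-(2 * α + 1) : ℝ) * x ^ 2) ≠ 0 :=
    ne_of_gt (one_add_pos hq0 x)
  have h1' : (∏' k : ℕ, (1 + q ^ (-(2 * α + 1) : ℝ) * x ^ 2 * q ^ (2 * k)))
      = (1 + q ^ (-(2 * α + 1) : ℝ) * x ^ 2) *
        ∏' k : ℕ, (1 + q ^ (-(2 * α + 1) : ℝ) * x ^ 2 * q ^ (2 * (k+1))) := by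
    simpa using h1
  have hs : (∏' k : ℕ, (1 + q ^ (-(2 * α + 1) : ℝ) * x ^ 2 * q ^ (2 * (k+1)))) ≠ 0 := by
    intro h0
    rw [h0, mul_zero] at h1'
    exact hnz h1'
  rw [h1', mul_inv, ← mul_assoc, mul_inv_cancel₀ hnz2, one_mul]

lemma sqrt_omega_q (hq0 : 0 < q) (hq1 : q < 1) (x : ℝ) :
    Real.sqrt (1 + q ^ (-(2 * α + 1) : ℝ) * x ^ 2) * Real.sqrt (omegaAlpha q α (q * x))
      = (1 + q ^ (-(2 * α + 1) : ℝ) * x ^ 2) * Real.sqrt (omegaAlpha q α x) := by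
  rw [omegaAlpha_q hq0 hq1 x,
    Real.sqrt_mul (one_add_pos hq0 x).le , ← mul_assoc,
    Real.mul_self_sqrt (one_add_pos hq0 x).le]
end Om
section Const
variable {q α : ℝ}

lemma constid (hq0 : 0 < q) (hq1 : q < 1) (hα : -1 < α) (n : ℕ) :
    q ^ (2*α + 3/2 : ℝ) * dAlpha q α n *
        (q^n * q ^ (-(2*α+1):ℝ) * (qPochAlpha q α (n+1) / qPochAlpha q α n))
      = Real.sqrt (qNumAlpha q α (n+1)) * dAlpha q α (n+1) * Real.sqrt (1-q) * (1 - q^(n+1)) := by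
  have hNum := qNumAlpha_pos hq0 hq1 hα n
  have hPn := qPochAlpha_pos (α := α) hq0 hq1 hα n
  have h1q := hq1' hq1
  have hQ := qPoch_q_pos hq0 hq1 n
  have hq1n : (0:ℝ) < 1 - q^(n+1) := oneSub_pow_pos hq0 hq1 (n+1) (by omega)
  unfold dAlpha
  rw [qPochAlpha_succ, Real.sqrt_mul hPn.le, Real.sqrt_mul h1q.le,
    qPoch_succ, show q * q^n = q^(n+1) from by rw [pow_succ]; ring]
  have hF2 : q ^ ((((n+1:ℕ)):ℝ)^2/2) =
      q ^ (2*α + 3/2 : ℝ) * q ^ (((n:ℝ))^2/2) * q ^ (-(2*α+1):ℝ) * q^n := by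
    rw [← Real.rpow_natCast q n, ← Real.rpow_add hq0, ← Real.rpow_add hq0,
      ← Real.rpow_add hq0]
    congr 1
    push_cast
    ring
  rw [hF2]
  field_simp
  ring_nf
  rw [show qNumAlpha q α (1+n) = qNumAlpha q α (n+1) from by rw [Nat.add_comm]]
  rw [Real.sq_sqrt hNum.le, Real.sq_sqrt h1q.le]
  ring
end Const
section Step
variable {q α : ℝ}

lemma step (hq0 : 0 < q) (hq1 : q < 1) (hα : -1 < α) (n : ℕ) (x : ℝ) (hx : x ≠ 0) :
    aPlus q α (phiQ q α n) x = Real.sqrt (qNumAlpha q α (n+1)) * phiQ q α (n+1) x := by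
  have hsx : Real.sqrt (1-q) ≠ 0 := ne_of_gt (Real.sqrt_pos.2 (hq1' hq1))
  have hq1n : (0:ℝ) < 1 - q^(n+1) := oneSub_pow_pos hq0 hq1 (n+1) (by omega)
  have hkey := key hq0 hq1 hα n x
  have hsq := sqrt_omega_q (α := α) hq0 hq1 x
  have hcon := constid (α := α) hq0 hq1 hα n
  unfold aPlus phiQ
  rw [omegaAlpha_even, hTilde_parity]
  rw [div_mul_eq_mul_div, div_eq_iff (mul_ne_zero hsx hx)]
  apply mul_right_cancel₀ hq1n.ne'
  rcases Nat.even_or_odd n with he | ho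
  · have hm1 : ((-1:ℝ))^n = 1 := he.neg_one_pow
    have h0 : n % 2 = 0 := Nat.even_iff.1 he
    rw [hm1, if_neg (by omega : ¬ n % 2 = 1)] at *
    linear_combination
      (q ^ (2*α + 3/2 : ℝ) * dAlpha q α n * hTilde q α n (q*x) * (1 - q^(n+1))) * hsq
      + (q ^ (2*α + 3/2 : ℝ) * dAlpha q α n * Real.sqrt (omegaAlpha q α x)) * hkey
      + (Real.sqrt (omegaAlpha q α x) * hTilde q α (n+1) x * x) * hcon
  · have hm1 : ((-1:ℝ))^n = -1 := ho.neg_one_pow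
    rw [hm1, if_pos (Nat.odd_iff.1 ho)] at *
    linear_combination
      (q ^ (2*α + 3/2 : ℝ) * dAlpha q α n * hTilde q α n (q*x) * (1 - q^(n+1))) * hsq
      + (q ^ (2*α + 3/2 : ℝ) * dAlpha q α n * Real.sqrt (omegaAlpha q α x)) * hkey
      + (Real.sqrt (omegaAlpha q α x) * hTilde q α (n+1) x * x) * hcon

lemma aPlus_smul (c : ℝ) (f g : ℝ → ℝ) (x : ℝ)
    (h1 : f (q*x) = c * g (q*x)) (h2 : f x = c * g x) (h3 : f (-x) = c * g (-x)) :
    aPlus q α f x = c * aPlus q α g x := by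
  unfold aPlus
  rw [h1, h2, h3]
  ring

lemma iterAll (hq0 : 0 < q) (hq1 : q < 1) (hα : -1 < α) (n : ℕ) :
    ∀ x : ℝ, x ≠ 0 → ((aPlus q α)^[n] (phiQ q α 0)) x
      = Real.sqrt (qFactAlpha q α n) * phiQ q α n x := by
  induction n with
  | zero =>
    intro x hx
    simp [qFactAlpha]
  | succ n ih =>
    intro x hx
    rw [Function.iterate_succ_apply']
    rw [aPlus_smul (Real.sqrt (qFactAlpha q α n)) _ (phiQ q α n) x
      (ih (q*x) (mul_ne_zero (ne_of_gt hq0) hx)) (ih x hx) (ih (-x) (neg_ne_zero.2 hx))]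
    rw [step hq0 hq1 hα n x hx, ← mul_assoc,
      ← Real.sqrt_mul (qFactAlpha_pos hq0 hq1 hα n).le, ← qFactAlpha_succ]

end Step

/-- the deformed Hermite functions are generated from the ground state
by iterating the creation operator. -/
theorem stmt_7 (q α : ℝ) (hq0 : 0 < q) (hq1 : q < 1) (hα : -1 < α) (n : ℕ)
    (x : ℝ) (hx : x ≠ 0) :
    phiQ q α n x =
      (Real.sqrt (qFactAlpha q α n))⁻¹ * ((aPlus q α)^[n] (phiQ q α 0)) x := by
  rw [iterAll hq0 hq1 hα n x hx, ← mul_assoc,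
    inv_mul_cancel₀ (ne_of_gt (Real.sqrt_pos.2 (qFactAlpha_pos hq0 hq1 hα n))), one_mul]
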